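/- arXiv:1212.1247 — 2 statements merged into one kernel-verified Lean document; each statement's English description precedes it below -/
import Mathlib

section
/- Let S = {x_1,…,x_n} be points in a metric space (K,d) with diameter at most 1, and suppose K can be covered by N open d-balls of radius δ/4. Let M be the n×n matrix with entries m_{ij} = d(x_i, x_j). Then the nuclear norm satisfies ‖M‖_* ≤ n^{3/2}·δ + sqrt(N)·n. -/
noncomputable def singularValues {m n : ℕ} (A : Matrix (Fin m) (Fin n) ℝ) : Fin n → ℝ :=
  fun i => Real.sqrt ((show (A.transpose * A).IsHermitian by
    simpa [Matrix.conjTranspose_eq_transpose_of_trivial] using Matrix.isHermitian_conjTranspose_mul_self A).eigenvalues i)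

noncomputable def nuclearNorm {m n : ℕ} (A : Matrix (Fin m) (Fin n) ℝ) : ℝ :=
  ∑ i, singularValues A i

noncomputable def frobeniusNorm {m n : ℕ} (A : Matrix (Fin m) (Fin n) ℝ) : ℝ :=
  Real.sqrt (∑ i, ∑ j, (A i j)^2)

noncomputable def matrixSpectralNorm {m n : ℕ} (A : Matrix (Fin m) (Fin n) ℝ) : ℝ :=
  ⨆ i, singularValues A i

open Matrix Finset

section Aux

variable {n : ℕ}

lemma sv_nonneg {m n : ℕ} (A : Matrix (Fin m) (Fin n) ℝ) (i : Fin n) :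
    0 ≤ singularValues A i := Real.sqrt_nonneg _

lemma sq_sv {m n : ℕ} (A : Matrix (Fin m) (Fin n) ℝ) (i : Fin n) :
    singularValues A i ^ 2 = (Matrix.isHermitian_conjTranspose_mul_self A).eigenvalues i :=
  Real.sq_sqrt (Matrix.eigenvalues_conjTranspose_mul_self_nonneg A i)

lemma star_coe_unitary {k : ℕ} {A : Matrix (Fin k) (Fin k) ℝ} (hA : A.IsHermitian) :
    star (hA.eigenvectorUnitary : Matrix (Fin k) (Fin k) ℝ)
      * (hA.eigenvectorUnitary : Matrix (Fin k) (Fin k) ℝ) = 1 := by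
  have := Unitary.coe_star_mul_self hA.eigenvectorUnitary
  exact this

lemma coe_unitary_star {k : ℕ} {A : Matrix (Fin k) (Fin k) ℝ} (hA : A.IsHermitian) :
    (hA.eigenvectorUnitary : Matrix (Fin k) (Fin k) ℝ)
      * star (hA.eigenvectorUnitary : Matrix (Fin k) (Fin k) ℝ) = 1 := by
  have := Unitary.coe_mul_star_self hA.eigenvectorUnitary
  exact this

-- diagonalization over ℝ without RCLike coercions
lemma real_diag {k : ℕ} {A : Matrix (Fin k) (Fin k) ℝ} (hA : A.IsHermitian) :
    star (hA.eigenvectorUnitary : Matrix (Fin k) (Fin k) ℝ) * A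
      * (hA.eigenvectorUnitary : Matrix (Fin k) (Fin k) ℝ)
      = Matrix.diagonal hA.eigenvalues := by
  have h1 : star (hA.eigenvectorUnitary : Matrix (Fin k) (Fin k) ℝ) * A
      * (hA.eigenvectorUnitary : Matrix (Fin k) (Fin k) ℝ)
      = Matrix.diagonal (RCLike.ofReal ∘ hA.eigenvalues) := by
    have hs := hA.spectral_theorem
    rw [Unitary.conjStarAlgAut_apply] at hs
    have hs2 := congrArg (fun X => star (hA.eigenvectorUnitary : Matrix (Fin k) (Fin k) ℝ) * X
      * (hA.eigenvectorUnitary : Matrix (Fin k) (Fin k) ℝ)) hs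
    rw [hs2]
    simp only [← mul_assoc, Unitary.coe_star_mul_self, one_mul]
    simp only [mul_assoc, Unitary.coe_star_mul_self, mul_one]
  have hc : (RCLike.ofReal ∘ hA.eigenvalues : Fin k → ℝ) = hA.eigenvalues := by
    funext i; simp [RCLike.ofReal_real_eq_id]
  rw [h1, hc]

lemma real_spectral {k : ℕ} {A : Matrix (Fin k) (Fin k) ℝ} (hA : A.IsHermitian) :
    A = (hA.eigenvectorUnitary : Matrix (Fin k) (Fin k) ℝ)
      * Matrix.diagonal hA.eigenvalues
      * star (hA.eigenvectorUnitary : Matrix (Fin k) (Fin k) ℝ) := by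
  have hc : (RCLike.ofReal ∘ hA.eigenvalues : Fin k → ℝ) = hA.eigenvalues := by
    funext i; simp [RCLike.ofReal_real_eq_id]
  conv_lhs => rw [hA.spectral_theorem]
  rw [hc, Unitary.conjStarAlgAut_apply]

-- sum of squares of singular values equals Frobenius norm squared
lemma sum_sq_sv {m : ℕ} (A : Matrix (Fin m) (Fin n) ℝ) :
    ∑ i, singularValues A i ^ 2 = ∑ i, ∑ j, (A i j)^2 := by
  classical
  simp only [sq_sv]
  have htr : (Aᴴ * A).trace
      = ∑ i, (Matrix.isHermitian_conjTranspose_mul_self A).eigenvalues i := by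
    conv_lhs => rw [real_spectral (Matrix.isHermitian_conjTranspose_mul_self A)]
    rw [Matrix.trace_mul_cycle,
      star_coe_unitary (Matrix.isHermitian_conjTranspose_mul_self A), Matrix.one_mul]
    simp [Matrix.trace_diagonal]
  rw [← htr, Matrix.trace]
  simp only [Matrix.diag_apply, Matrix.mul_apply, Matrix.conjTranspose_apply, star_trivial]
  rw [Finset.sum_comm]
  simp [sq]

lemma sum_sq_sv' {m : ℕ} (A : Matrix (Fin m) (Fin n) ℝ) :
    Real.sqrt (∑ i, singularValues A i ^ 2) = frobeniusNorm A := by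
  rw [sum_sq_sv]; rfl

lemma nuclearNorm_le_sqrt_card_mul {m : ℕ} (A : Matrix (Fin m) (Fin n) ℝ)
    (s : Finset (Fin n)) (hs : ∀ i ∉ s, singularValues A i = 0) :
    nuclearNorm A ≤ Real.sqrt s.card * frobeniusNorm A := by
  have h1 : nuclearNorm A = ∑ i ∈ s, 1 * singularValues A i := by
    rw [nuclearNorm, ← Finset.sum_subset (Finset.subset_univ s)]
    · simp
    · intro i _ hi; exact hs i hi
  rw [h1]
  refine le_trans (Real.sum_mul_le_sqrt_mul_sqrt s 1 _) ?_
  have h2 : (∑ i ∈ s, (1 : Fin n → ℝ) i ^ 2) = (s.card : ℝ) := by simp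
  rw [h2]
  apply mul_le_mul_of_nonneg_left _ (Real.sqrt_nonneg _)
  rw [← sum_sq_sv' A]
  apply Real.sqrt_le_sqrt
  apply Finset.sum_le_sum_of_subset_of_nonneg (Finset.subset_univ s)
  intro i _ _; positivity

lemma nuclearNorm_le_sqrt_rank_mul (A : Matrix (Fin n) (Fin n) ℝ) :
    nuclearNorm A ≤ Real.sqrt (A.rank) * frobeniusNorm A := by
  classical
  have hcard : (Finset.univ.filter (fun i => singularValues A i ≠ 0)).card = A.rank := by
    rw [← Matrix.rank_conjTranspose_mul_self A,
      (Matrix.isHermitian_conjTranspose_mul_self A).rank_eq_card_non_zero_eigs,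
      Fintype.card_subtype]
    apply Finset.card_bij (fun i _ => i) <;> try (intro a b _ _ h; exact h)
    · intro i hi
      simp only [Finset.mem_filter, Finset.mem_univ, true_and] at hi ⊢
      intro hc
      exact hi (Real.sqrt_eq_zero'.mpr hc.le)
    · intro i hi
      refine ⟨i, ?_, rfl⟩
      simp only [Finset.mem_filter, Finset.mem_univ, true_and] at hi ⊢
      intro hc
      exact hi ((Real.sqrt_eq_zero (Matrix.eigenvalues_conjTranspose_mul_self_nonneg A i)).mp hc)
  rw [← hcard]
  apply nuclearNorm_le_sqrt_card_mul
  intro i hi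
  simp only [Finset.mem_filter, Finset.mem_univ, true_and, not_not] at hi
  exact hi

-- key lemma: trace (Wᵀ * B) ≤ nuclearNorm B for contractions W
lemma trace_le_nuclearNorm (B W : Matrix (Fin n) (Fin n) ℝ)
    (hW : ∀ q : Fin n → ℝ, ∑ k, (W.mulVec q k)^2 ≤ ∑ k, (q k)^2) :
    Matrix.trace (Wᵀ * B) ≤ nuclearNorm B := by
  classical
  have h := Matrix.isHermitian_conjTranspose_mul_self B
  set U : Matrix (Fin n) (Fin n) ℝ := (h.eigenvectorUnitary : Matrix (Fin n) (Fin n) ℝ) with hUdef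
  have hU1 : U * Uᵀ = 1 := by
    rw [show Uᵀ = star U from (Matrix.star_eq_conjTranspose U ▸
      (Matrix.conjTranspose_eq_transpose_of_trivial U).symm)]
    exact coe_unitary_star h
  have hU2 : Uᵀ * U = 1 := by
    rw [show Uᵀ = star U from (Matrix.star_eq_conjTranspose U ▸
      (Matrix.conjTranspose_eq_transpose_of_trivial U).symm)]
    exact star_coe_unitary h
  have hdiag : Uᵀ * (Bᴴ * B) * U = Matrix.diagonal h.eigenvalues := by
    rw [show Uᵀ = star U from (Matrix.star_eq_conjTranspose U ▸
      (Matrix.conjTranspose_eq_transpose_of_trivial U).symm)]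
    exact real_diag h
  have key : Matrix.trace (Wᵀ * B) = ∑ i, ∑ k, (W * U) k i * (B * U) k i := by
    have h0 : Matrix.trace (Wᵀ * B) = Matrix.trace (Uᵀ * (Wᵀ * B) * U) := by
      rw [Matrix.trace_mul_cycle, ← Matrix.mul_assoc, hU1, Matrix.one_mul]
    have h1 : Uᵀ * (Wᵀ * B) * U = (W * U)ᵀ * (B * U) := by
      rw [Matrix.transpose_mul]
      simp only [Matrix.mul_assoc]
    rw [h0, h1, Matrix.trace]
    simp only [Matrix.diag_apply, Matrix.mul_apply, Matrix.transpose_apply]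
  rw [key]
  apply Finset.sum_le_sum
  intro i _
  have e1 : (B * U)ᵀ * (B * U) = Matrix.diagonal h.eigenvalues := by
    rw [← hdiag, Matrix.transpose_mul,
      show Bᵀ = Bᴴ from (Matrix.conjTranspose_eq_transpose_of_trivial B).symm]
    simp only [Matrix.mul_assoc]
  have hBU : ∑ k, ((B * U) k i)^2 = h.eigenvalues i := by
    have e2 : ((B * U)ᵀ * (B * U)) i i = h.eigenvalues i := by
      rw [e1, Matrix.diagonal_apply_eq]
    rw [← e2, Matrix.mul_apply]
    simp [Matrix.transpose_apply, sq]
  have hWU : ∑ k, ((W * U) k i)^2 ≤ 1 := by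
    have e3 : ∀ k, (W * U) k i = W.mulVec (fun a => U a i) k := by
      intro k; simp [Matrix.mul_apply, Matrix.mulVec, dotProduct]
    have e4 : ∑ k, (U k i)^2 = 1 := by
      have h5 : (Uᵀ * U) i i = (1 : Matrix (Fin n) (Fin n) ℝ) i i := by rw [hU2]
      simp only [Matrix.mul_apply, Matrix.transpose_apply, Matrix.one_apply_eq] at h5
      rw [← h5]; simp [sq]
    calc ∑ k, ((W * U) k i)^2 = ∑ k, (W.mulVec (fun a => U a i) k)^2 := by
          simp only [e3]
      _ ≤ ∑ k, (U k i)^2 := hW _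
      _ = 1 := e4
  calc ∑ k, (W * U) k i * (B * U) k i
      ≤ Real.sqrt (∑ k, ((W * U) k i)^2) * Real.sqrt (∑ k, ((B * U) k i)^2) :=
        Real.sum_mul_le_sqrt_mul_sqrt _ _ _
    _ ≤ 1 * Real.sqrt (∑ k, ((B * U) k i)^2) :=
        mul_le_mul_of_nonneg_right (Real.sqrt_le_one.mpr hWU) (Real.sqrt_nonneg _)
    _ = singularValues B i := by
        rw [one_mul, hBU]
        rfl

end Aux

section Dual
variable {n : ℕ}

lemma exists_contraction_trace (Mm : Matrix (Fin n) (Fin n) ℝ) :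
    ∃ W : Matrix (Fin n) (Fin n) ℝ,
      (∀ q : Fin n → ℝ, ∑ k, (W.mulVec q k)^2 ≤ ∑ k, (q k)^2) ∧
      Matrix.trace (Wᵀ * Mm) = nuclearNorm Mm := by
  classical
  have h := Matrix.isHermitian_conjTranspose_mul_self Mm
  set U : Matrix (Fin n) (Fin n) ℝ := (h.eigenvectorUnitary : Matrix (Fin n) (Fin n) ℝ)
    with hUdef
  have hstar : Uᵀ = star U := by
    rw [Matrix.star_eq_conjTranspose, Matrix.conjTranspose_eq_transpose_of_trivial]
  have hU1 : U * Uᵀ = 1 := by rw [hstar]; exact coe_unitary_star h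
  have hU2 : Uᵀ * U = 1 := by rw [hstar]; exact star_coe_unitary h
  have hdiag : Uᵀ * (Mmᴴ * Mm) * U = Matrix.diagonal h.eigenvalues := by
    rw [hstar]; exact real_diag h
  have hln : ∀ i, 0 ≤ h.eigenvalues i :=
    fun i => Matrix.eigenvalues_conjTranspose_mul_self_nonneg Mm i
  have hMH : Mmᵀ = Mmᴴ := (Matrix.conjTranspose_eq_transpose_of_trivial Mm).symm
  set g : Fin n → ℝ :=
    fun i => if h.eigenvalues i = 0 then 0 else (Real.sqrt (h.eigenvalues i))⁻¹ with hg
  set e : Fin n → ℝ := fun i => if h.eigenvalues i = 0 then 0 else 1 with he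
  set G : Matrix (Fin n) (Fin n) ℝ := Matrix.diagonal g with hG
  set W : Matrix (Fin n) (Fin n) ℝ := Mm * U * G * Uᵀ with hWdef
  have hWt : Wᵀ = U * G * Uᵀ * Mmᵀ := by
    rw [hWdef]
    simp only [Matrix.transpose_mul, Matrix.transpose_transpose, hG,
      Matrix.diagonal_transpose]
    simp only [Matrix.mul_assoc]
  have hge : ∀ i, g i * h.eigenvalues i * g i = e i := by
    intro i
    by_cases hc : h.eigenvalues i = 0
    · simp [hg, he, hc, -Matrix.conjTranspose_eq_transpose_of_trivial]
    · have hpos : 0 < h.eigenvalues i := lt_of_le_of_ne (hln i) (Ne.symm hc)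
      have hs : Real.sqrt (h.eigenvalues i) * Real.sqrt (h.eigenvalues i)
          = h.eigenvalues i := Real.mul_self_sqrt (hln i)
      have hsne : Real.sqrt (h.eigenvalues i) ≠ 0 :=
        ne_of_gt (Real.sqrt_pos.mpr hpos)
      simp only [hg, he, hc, if_false]
      have h9 : (Real.sqrt (h.eigenvalues i))⁻¹ * h.eigenvalues i
            * (Real.sqrt (h.eigenvalues i))⁻¹
          = h.eigenvalues i
            * (Real.sqrt (h.eigenvalues i) * Real.sqrt (h.eigenvalues i))⁻¹ := by
        rw [mul_inv]; ring
      rw [h9, hs, mul_inv_cancel₀ hc]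
  have hWW : Wᵀ * W = U * Matrix.diagonal (fun i => e i) * Uᵀ := by
    rw [hWt, hWdef]
    calc U * G * Uᵀ * Mmᵀ * (Mm * U * G * Uᵀ)
        = U * G * (Uᵀ * (Mmᴴ * Mm) * U) * G * Uᵀ := by
          rw [hMH]; simp only [Matrix.mul_assoc]
      _ = U * G * Matrix.diagonal h.eigenvalues * G * Uᵀ := by rw [hdiag]
      _ = U * Matrix.diagonal (fun i => e i) * Uᵀ := by
          have hdd : G * Matrix.diagonal h.eigenvalues * G
              = Matrix.diagonal (fun i => e i) := by
            rw [hG, Matrix.diagonal_mul_diagonal, Matrix.diagonal_mul_diagonal]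
            exact congrArg Matrix.diagonal (funext fun i => hge i)
          rw [← hdd]
          simp only [Matrix.mul_assoc]
  refine ⟨W, ?_, ?_⟩
  · intro q
    have hdot : ∀ v : Fin n → ℝ, ∑ k, (v k)^2 = v ⬝ᵥ v := by
      intro v; simp [dotProduct, sq]
    have step1 : ∑ k, (W.mulVec q k)^2 = q ⬝ᵥ ((Wᵀ * W).mulVec q) := by
      rw [hdot, Matrix.dotProduct_mulVec, ← Matrix.mulVec_transpose,
        Matrix.mulVec_mulVec, dotProduct_comm, Matrix.dotProduct_mulVec,
        ← Matrix.mulVec_transpose, Matrix.transpose_mul, Matrix.transpose_transpose]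
    set p : Fin n → ℝ := Uᵀ.mulVec q with hp
    have step2 : q ⬝ᵥ ((Wᵀ * W).mulVec q) = ∑ i, e i * (p i)^2 := by
      rw [hWW, ← Matrix.mulVec_mulVec, ← Matrix.mulVec_mulVec,
        Matrix.dotProduct_mulVec (v := q) (A := U), ← Matrix.mulVec_transpose]
      have : (Matrix.diagonal (fun i => e i)).mulVec (Uᵀ.mulVec q)
          = fun i => e i * p i := by
        funext i; rw [Matrix.mulVec_diagonal]
      rw [this]
      simp only [dotProduct, sq]
      exact Finset.sum_congr rfl fun i _ => by ring
    have step3 : ∑ i, e i * (p i)^2 ≤ ∑ i, (p i)^2 := by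
      apply Finset.sum_le_sum
      intro i _
      by_cases hc : h.eigenvalues i = 0 <;> simp [he, hc, -Matrix.conjTranspose_eq_transpose_of_trivial] <;> positivity
    have step4 : ∑ i, (p i)^2 = ∑ k, (q k)^2 := by
      rw [hdot, hdot, hp, Matrix.dotProduct_mulVec, ← Matrix.mulVec_transpose,
        Matrix.mulVec_mulVec, Matrix.transpose_transpose, hU1, Matrix.one_mulVec,
        dotProduct_comm]
    rw [step1, step2, ← step4]
    exact step3
  · have hsum : Matrix.trace (Wᵀ * Mm) = ∑ i, h.eigenvalues i * g i := by
      calc Matrix.trace (Wᵀ * Mm)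
          = Matrix.trace ((U * G) * (Uᵀ * Mmᵀ * Mm)) := by
            rw [hWt]; congr 1; simp only [Matrix.mul_assoc]
        _ = Matrix.trace ((Uᵀ * Mmᵀ * Mm) * (U * G)) := Matrix.trace_mul_comm _ _
        _ = Matrix.trace ((Uᵀ * (Mmᴴ * Mm) * U) * G) := by
            congr 1; rw [hMH]; simp only [Matrix.mul_assoc]
        _ = Matrix.trace (Matrix.diagonal h.eigenvalues * G) := by rw [hdiag]
        _ = ∑ i, h.eigenvalues i * g i := by
            rw [hG, Matrix.diagonal_mul_diagonal]
            simp [Matrix.trace_diagonal]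
    rw [hsum]
    have : nuclearNorm Mm = ∑ i, Real.sqrt (h.eigenvalues i) := rfl
    rw [this]
    apply Finset.sum_congr rfl
    intro i _
    by_cases hc : h.eigenvalues i = 0
    · simp [hg, hc, -Matrix.conjTranspose_eq_transpose_of_trivial]
    · have hpos : 0 < h.eigenvalues i := lt_of_le_of_ne (hln i) (Ne.symm hc)
      have hs : Real.sqrt (h.eigenvalues i) * Real.sqrt (h.eigenvalues i)
          = h.eigenvalues i := Real.mul_self_sqrt (hln i)
      have hsne : Real.sqrt (h.eigenvalues i) ≠ 0 := ne_of_gt (Real.sqrt_pos.mpr hpos)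
      simp only [hg, hc, if_false]
      nth_rewrite 1 [← hs]
      rw [mul_assoc, mul_inv_cancel₀ hsne, mul_one]

end Dual

theorem distanceMatrix_nuclearNorm_le {K : Type*} [MetricSpace K]
    (hdiam : ∀ a b : K, dist a b ≤ 1)
    {n N : ℕ} (δ : ℝ) (hδ : 0 < δ) (c : Fin N → K)
    (hcov : ∀ z : K, ∃ i, dist z (c i) < δ / 4)
    (x : Fin n → K) (M : Matrix (Fin n) (Fin n) ℝ)
    (hM : ∀ i j, M i j = dist (x i) (x j)) :
    nuclearNorm M ≤ (n : ℝ) ^ ((3:ℝ)/2) * δ + Real.sqrt (N : ℝ) * n := by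
  classical
  choose f hfd using fun i => hcov (x i)
  set A : Matrix (Fin n) (Fin n) ℝ := Matrix.of fun i j => dist (c (f i)) (x j) with hA
  set E : Matrix (Fin n) (Fin n) ℝ := M - A with hE2
  -- split via the dual contraction
  obtain ⟨W, hWc, hWt⟩ := exists_contraction_trace M
  have hsplit : nuclearNorm M ≤ nuclearNorm A + nuclearNorm E := by
    rw [← hWt]
    have hAE : A + E = M := by rw [hE2]; exact add_sub_cancel A M
    have : Matrix.trace (Wᵀ * M) = Matrix.trace (Wᵀ * A) + Matrix.trace (Wᵀ * E) := by
      rw [← hAE, Matrix.mul_add, Matrix.trace_add]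
    rw [this]
    exact add_le_add (trace_le_nuclearNorm A W hWc) (trace_le_nuclearNorm E W hWc)
  -- entries of E are small
  have hEentry : ∀ i j, |E i j| ≤ δ := by
    intro i j
    have h1 : E i j = dist (x i) (x j) - dist (c (f i)) (x j) := by
      simp [hE2, hA, hM i j, Matrix.sub_apply]
    rw [h1]
    have h2 := abs_dist_sub_le (x i) (c (f i)) (x j)
    have := hfd i
    calc |dist (x i) (x j) - dist (c (f i)) (x j)| ≤ dist (x i) (c (f i)) := h2
      _ ≤ δ := by linarith
  -- Frobenius bounds
  have hfroE : frobeniusNorm E ≤ n * δ := by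
    have h1 : (∑ i, ∑ j, (E i j)^2) ≤ ((n : ℝ) * δ)^2 := by
      calc (∑ i, ∑ j, (E i j)^2) ≤ ∑ _i : Fin n, ∑ _j : Fin n, δ^2 := by
            apply Finset.sum_le_sum; intro i _
            apply Finset.sum_le_sum; intro j _
            rw [← sq_abs]
            exact pow_le_pow_left₀ (abs_nonneg _) (hEentry i j) 2
        _ = ((n : ℝ) * δ)^2 := by
            simp [Finset.sum_const]
            ring
    calc frobeniusNorm E ≤ Real.sqrt (((n : ℝ) * δ)^2) := Real.sqrt_le_sqrt h1
      _ = (n : ℝ) * δ := Real.sqrt_sq (by positivity)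
  have hfroA : frobeniusNorm A ≤ n := by
    have h1 : (∑ i, ∑ j, (A i j)^2) ≤ ((n : ℝ))^2 := by
      calc (∑ i, ∑ j, (A i j)^2) ≤ ∑ _i : Fin n, ∑ _j : Fin n, (1:ℝ) := by
            apply Finset.sum_le_sum; intro i _
            apply Finset.sum_le_sum; intro j _
            have hd1 : dist (c (f i)) (x j) ≤ 1 := hdiam _ _
            have hd0 : (0:ℝ) ≤ dist (c (f i)) (x j) := dist_nonneg
            have : (A i j)^2 = (dist (c (f i)) (x j))^2 := by simp [hA]
            rw [this]
            nlinarith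
        _ = ((n : ℝ))^2 := by simp [Finset.sum_const]; ring
    calc frobeniusNorm A ≤ Real.sqrt (((n : ℝ))^2) := Real.sqrt_le_sqrt h1
      _ = (n : ℝ) := Real.sqrt_sq (by positivity)
  -- nuclear norm of E
  have hnE : nuclearNorm E ≤ (n : ℝ) ^ ((3:ℝ)/2) * δ := by
    have h1 : nuclearNorm E ≤ Real.sqrt ((Finset.univ : Finset (Fin n)).card) * frobeniusNorm E :=
      nuclearNorm_le_sqrt_card_mul E Finset.univ (by simp)
    have h2 : ((Finset.univ : Finset (Fin n)).card : ℝ) = n := by simp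
    rw [h2] at h1
    have h3 : Real.sqrt n * frobeniusNorm E ≤ Real.sqrt n * ((n:ℝ) * δ) :=
      mul_le_mul_of_nonneg_left hfroE (Real.sqrt_nonneg _)
    have h4 : Real.sqrt n * ((n:ℝ) * δ) = (n : ℝ) ^ ((3:ℝ)/2) * δ := by
      have h5 : (n : ℝ) ^ ((3:ℝ)/2) = (n:ℝ) * Real.sqrt n := by
        rw [Real.sqrt_eq_rpow, show ((3:ℝ)/2) = 1 + 1/2 by norm_num,
          Real.rpow_add_of_nonneg (Nat.cast_nonneg n) zero_le_one (by norm_num),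
          Real.rpow_one]
      rw [h5]; ring
    linarith
  -- nuclear norm of A
  have hrank : (A.rank : ℝ) ≤ (N : ℝ) := by
    have hfac : A = (Matrix.of fun i k => if f i = k then (1:ℝ) else 0)
        * (Matrix.of fun k j => dist (c k) (x j)) := by
      ext i j
      rw [Matrix.mul_apply]
      simp [hA, Matrix.of_apply, ite_mul, Finset.sum_ite_eq]
    have h1 : A.rank ≤ N := by
      rw [hfac]
      calc ((Matrix.of fun i k => if f i = k then (1:ℝ) else 0)
            * (Matrix.of fun k j => dist (c k) (x j))).rank
          ≤ (Matrix.of fun k j => dist (c k) (x j)).rank := Matrix.rank_mul_le_right _ _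
        _ ≤ N := le_trans (Matrix.rank_le_card_height _) (by simp)
    exact_mod_cast h1
  have hnA : nuclearNorm A ≤ Real.sqrt N * n := by
    calc nuclearNorm A ≤ Real.sqrt (A.rank) * frobeniusNorm A :=
          nuclearNorm_le_sqrt_rank_mul A
      _ ≤ Real.sqrt N * n := by
          apply mul_le_mul (Real.sqrt_le_sqrt hrank) hfroA ?h1 (Real.sqrt_nonneg _)
          rw [← sum_sq_sv' A]
          exact Real.sqrt_nonneg _
  linarith
end

section
/- Let f : [0,1]² → [0,1], let f_k be its dyadic-average approximation at level k, and let U_1,…,U_n be i.i.d. Uniform[0,1] random variables. Let M and N be the n×n random matrices with entries f(U_i,U_j) and f_k(U_i,U_j) respectively. Then E‖M − N‖_F² ≤ n + n²·‖f − f_k‖²_{L²}, and N has rank at most 2^k almost surely, so that ‖N‖_* ≤ 2^{k/2}·n and E‖M‖_* ≤ (2^{k/2}+1)·n + n^{3/2}·‖f − f_k‖_{L²}. -/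
open MeasureTheory ProbabilityTheory

theorem Matrix.isHermitian_transpose_mul_self {m n : ℕ} (A : Matrix (Fin m) (Fin n) ℝ) :
    (A.transpose * A).IsHermitian := by
  simpa [Matrix.conjTranspose_eq_transpose_of_trivial] using
    Matrix.isHermitian_conjTranspose_mul_self A

section AuxLA
open Matrix
variable {n : ℕ}

lemma gma_singularValues_nonneg (A : Matrix (Fin n) (Fin n) ℝ) (i : Fin n) :
    0 ≤ singularValues A i := Real.sqrt_nonneg _

lemma gma_eig_nonneg (A : Matrix (Fin n) (Fin n) ℝ) (i : Fin n) :
    0 ≤ (Matrix.isHermitian_transpose_mul_self A).eigenvalues i :=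
  (Matrix.posSemidef_conjTranspose_mul_self A).eigenvalues_nonneg i

lemma gma_sum_eig_eq (A : Matrix (Fin n) (Fin n) ℝ) :
    ∑ i, (Matrix.isHermitian_transpose_mul_self A).eigenvalues i = ∑ i, ∑ j, (A i j)^2 := by
  set hA := Matrix.isHermitian_transpose_mul_self A
  have h : (Aᴴ * A).trace = ∑ i, hA.eigenvalues i := by
    rw [Matrix.conjTranspose_eq_transpose_of_trivial]
    rw [hA.trace_eq_sum_eigenvalues]
    simp
  rw [← h, Matrix.trace, Finset.sum_comm]
  simp [Matrix.diag, Matrix.mul_apply, Matrix.conjTranspose_apply, sq]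

lemma gma_sum_sq_singularValues (A : Matrix (Fin n) (Fin n) ℝ) :
    ∑ i, (singularValues A i)^2 = ∑ i, ∑ j, (A i j)^2 := by
  have h : ∀ i, (singularValues A i)^2
      = (Matrix.isHermitian_transpose_mul_self A).eigenvalues i :=
    fun i => Real.sq_sqrt (gma_eig_nonneg A i)
  simp_rw [h]; exact gma_sum_eig_eq A

lemma gma_frobeniusNorm_nonneg (A : Matrix (Fin n) (Fin n) ℝ) : 0 ≤ frobeniusNorm A :=
  Real.sqrt_nonneg _

lemma gma_nuclearNorm_le_sqrt_mul (A : Matrix (Fin n) (Fin n) ℝ) (r : ℕ)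
    (hcard : ((Finset.univ.filter
      (fun i => singularValues A i ≠ 0)).card : ℝ) ≤ r) :
    nuclearNorm A ≤ Real.sqrt r * frobeniusNorm A := by
  classical
  set S := Finset.univ.filter (fun i => singularValues A i ≠ 0) with hS
  have h1 : nuclearNorm A = ∑ i ∈ S, singularValues A i := by
    rw [nuclearNorm, ← Finset.sum_filter_ne_zero]
  have h2 : (∑ i ∈ S, singularValues A i)^2 ≤ (r : ℝ) * ∑ i, (singularValues A i)^2 := by
    calc (∑ i ∈ S, singularValues A i)^2 = (∑ i ∈ S, 1 * singularValues A i)^2 := by simp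
    _ ≤ (∑ i ∈ S, (1:ℝ)^2) * (∑ i ∈ S, (singularValues A i)^2) :=
        Finset.sum_mul_sq_le_sq_mul_sq S _ _
    _ ≤ (r : ℝ) * ∑ i, (singularValues A i)^2 := by
        apply mul_le_mul
        · simpa using hcard
        · exact Finset.sum_le_sum_of_subset_of_nonneg (Finset.filter_subset _ _)
            (fun i _ _ => sq_nonneg _)
        · positivity
        · positivity
  have h3 : 0 ≤ ∑ i ∈ S, singularValues A i :=
    Finset.sum_nonneg (fun i _ => gma_singularValues_nonneg A i)
  rw [h1, ← Real.sqrt_sq h3]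
  calc Real.sqrt ((∑ i ∈ S, singularValues A i)^2)
      ≤ Real.sqrt ((r : ℝ) * ∑ i, (singularValues A i)^2) := Real.sqrt_le_sqrt h2
    _ = Real.sqrt r * frobeniusNorm A := by
        rw [Real.sqrt_mul (by positivity), frobeniusNorm, gma_sum_sq_singularValues]

lemma gma_nuclearNorm_le_sqrt_rank_mul (A : Matrix (Fin n) (Fin n) ℝ) :
    nuclearNorm A ≤ Real.sqrt A.rank * frobeniusNorm A := by
  classical
  apply gma_nuclearNorm_le_sqrt_mul A A.rank
  have h1 : A.rank = (Aᴴ * A).rank := (Matrix.rank_conjTranspose_mul_self A).symm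
  rw [Matrix.conjTranspose_eq_transpose_of_trivial] at h1
  rw [h1, (Matrix.isHermitian_transpose_mul_self A).rank_eq_card_non_zero_eigs,
    Fintype.card_subtype]
  norm_cast
  apply Finset.card_le_card
  intro i hi
  simp only [Finset.mem_filter, Finset.mem_univ, true_and] at hi ⊢
  intro h
  exact hi (by rw [singularValues, h, Real.sqrt_zero])

lemma gma_nuclearNorm_le_sqrt_card_mul (A : Matrix (Fin n) (Fin n) ℝ) :
    nuclearNorm A ≤ Real.sqrt n * frobeniusNorm A := by
  classical
  apply gma_nuclearNorm_le_sqrt_mul A n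
  exact_mod_cast (Finset.card_filter_le _ _).trans (by simp)

lemma gma_inner_eq_dot (x y : EuclideanSpace ℝ (Fin n)) :
    (inner ℝ x y : ℝ) = dotProduct (⇑x) (⇑y) := by
  simp [PiLp.inner_apply, dotProduct, RCLike.inner_apply, starRingEnd_apply, mul_comm]

lemma gma_onb_coord_sum (b : OrthonormalBasis (Fin n) ℝ (EuclideanSpace ℝ (Fin n))) (a c : Fin n) :
    ∑ i, b i a * b i c = if a = c then (1:ℝ) else 0 := by
  have h := b.sum_inner_mul_inner (EuclideanSpace.single a (1:ℝ)) (EuclideanSpace.single c (1:ℝ))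
  simp only [EuclideanSpace.inner_single_left, EuclideanSpace.inner_single_right,
    starRingEnd_apply, star_trivial, one_mul, mul_one] at h
  rw [h, EuclideanSpace.single_apply]
  simp [eq_comm]

lemma gma_trace_eq_onb (B : Matrix (Fin n) (Fin n) ℝ)
    (b : OrthonormalBasis (Fin n) ℝ (EuclideanSpace ℝ (Fin n))) :
    B.trace = ∑ i, dotProduct (⇑(b i)) (B *ᵥ ⇑(b i)) := by
  have h1 : ∀ i, dotProduct (⇑(b i)) (B *ᵥ ⇑(b i))
      = ∑ a, ∑ c, B a c * (b i a * b i c) := by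
    intro i
    simp only [dotProduct, Matrix.mulVec, dotProduct, Finset.mul_sum]
    congr 1; ext a; congr 1; ext c
    ring
  simp_rw [h1]
  rw [Finset.sum_comm]
  have h2 : ∀ a, ∑ i, ∑ c, B a c * (b i a * b i c) = B a a := by
    intro a
    rw [Finset.sum_comm]
    simp_rw [← Finset.mul_sum, gma_onb_coord_sum]
    simp
  simp_rw [h2]
  rfl

lemma gma_vecMulVec_transpose (v w : Fin n → ℝ) :
    (Matrix.vecMulVec v w)ᵀ = Matrix.vecMulVec w v := by
  ext a b; simp [Matrix.vecMulVec_apply, Matrix.transpose_apply, mul_comm]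

lemma gma_vecMulVec_mulVec (v w x : Fin n → ℝ) :
    Matrix.vecMulVec v w *ᵥ x = (dotProduct w x) • v := by
  ext a
  simp only [Matrix.mulVec, Matrix.vecMulVec_apply, dotProduct, Pi.smul_apply,
    smul_eq_mul, Finset.sum_mul, Finset.mul_sum]
  congr 1; ext b; ring

lemma gma_trace_vecMulVec_mul (v w : Fin n → ℝ) (A : Matrix (Fin n) (Fin n) ℝ) :
    (Matrix.vecMulVec v w * A).trace = dotProduct w (A *ᵥ v) := by
  rw [Matrix.trace]
  simp only [Matrix.diag, Matrix.mul_apply, Matrix.vecMulVec_apply, dotProduct,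
    Matrix.mulVec, dotProduct]
  rw [Finset.sum_comm]
  congr 1; ext b
  rw [Finset.mul_sum]
  congr 1; ext a; ring

lemma gma_sum_mulVec {m : ℕ} (s : Finset (Fin m)) (M : Fin m → Matrix (Fin n) (Fin n) ℝ)
    (x : Fin n → ℝ) : (∑ i ∈ s, M i) *ᵥ x = ∑ i ∈ s, M i *ᵥ x := by
  ext a
  simp only [Matrix.mulVec, dotProduct, Finset.sum_apply, Matrix.sum_apply,
    Finset.sum_mul]
  rw [Finset.sum_comm]

lemma gma_dotProduct_sum {m : ℕ} (s : Finset (Fin m)) (v : Fin n → ℝ) (w : Fin m → Fin n → ℝ) :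
    dotProduct v (∑ i ∈ s, w i) = ∑ i ∈ s, dotProduct v (w i) := by
  simp only [dotProduct, Finset.sum_apply, Finset.mul_sum]
  rw [Finset.sum_comm]

lemma gma_sum_dotProduct {m : ℕ} (s : Finset (Fin m)) (v : Fin n → ℝ) (w : Fin m → Fin n → ℝ) :
    dotProduct (∑ i ∈ s, w i) v = ∑ i ∈ s, dotProduct (w i) v := by
  rw [dotProduct_comm, gma_dotProduct_sum]
  simp_rw [dotProduct_comm v]

lemma gma_inv_sqrt_mul_self (l : ℝ) (hl : 0 ≤ l) : (Real.sqrt l)⁻¹ * l = Real.sqrt l := by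
  rcases eq_or_lt_of_le hl with h | h
  · simp [← h]
  · conv_lhs => rw [← Real.mul_self_sqrt h.le]
    have : Real.sqrt l ≠ 0 := by positivity
    field_simp
    rw [Real.sqrt_sq (Real.sqrt_nonneg _)]

lemma gma_sq_inv_sqrt_mul_self (l : ℝ) (hl : 0 ≤ l) : ((Real.sqrt l)⁻¹)^2 * l ≤ 1 := by
  rcases eq_or_lt_of_le hl with h | h
  · simp [← h]
  · rw [← Real.sq_sqrt h.le]
    have : Real.sqrt l ≠ 0 := by positivity
    field_simp
    exact le_of_eq (by rw [Real.sqrt_sq (Real.sqrt_nonneg _)])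

lemma gma_dot_cs (x y : Fin n → ℝ) :
    dotProduct x y
      ≤ Real.sqrt (dotProduct x x) * Real.sqrt (dotProduct y y) := by
  have h := Finset.sum_mul_sq_le_sq_mul_sq Finset.univ x y
  have h0 : dotProduct x y ≤ Real.sqrt ((dotProduct x y)^2) := by
    rw [Real.sqrt_sq_eq_abs]; exact le_abs_self _
  refine h0.trans ?_
  have hxx : (0:ℝ) ≤ dotProduct x x :=
    Finset.sum_nonneg fun i _ => mul_self_nonneg _
  rw [← Real.sqrt_mul hxx]
  apply Real.sqrt_le_sqrt
  simpa [dotProduct, sq] using h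

lemma gma_mulVec_basis_dot (A : Matrix (Fin n) (Fin n) ℝ) (i j : Fin n) :
    dotProduct (A *ᵥ ⇑((Matrix.isHermitian_transpose_mul_self A).eigenvectorBasis i))
      (A *ᵥ ⇑((Matrix.isHermitian_transpose_mul_self A).eigenvectorBasis j))
    = if i = j then (Matrix.isHermitian_transpose_mul_self A).eigenvalues i else 0 := by
  classical
  set hA := Matrix.isHermitian_transpose_mul_self A
  set b := hA.eigenvectorBasis with hb
  rw [Matrix.dotProduct_mulVec, ← Matrix.mulVec_transpose, Matrix.mulVec_mulVec,
    hA.mulVec_eigenvectorBasis,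
    smul_dotProduct]
  have hbd : dotProduct (⇑(b i)) (⇑(b j)) = if i = j then (1:ℝ) else 0 := by
    rw [← gma_inner_eq_dot]
    exact orthonormal_iff_ite.mp b.orthonormal i j
  rw [hbd]
  by_cases h : i = j <;> simp [h]

lemma gma_trace_mul_le (A Q : Matrix (Fin n) (Fin n) ℝ)
    (hQ : ∀ x : Fin n → ℝ, dotProduct (Qᵀ *ᵥ x) (Qᵀ *ᵥ x) ≤ dotProduct x x) :
    (Q * A).trace ≤ nuclearNorm A := by
  classical
  set hA := Matrix.isHermitian_transpose_mul_self A
  set b := hA.eigenvectorBasis with hb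
  rw [gma_trace_eq_onb _ b, nuclearNorm]
  apply Finset.sum_le_sum
  intro i _
  have hvv : dotProduct (⇑(b i)) (⇑(b i)) = 1 := by
    rw [← gma_inner_eq_dot]
    simpa using orthonormal_iff_ite.mp b.orthonormal i i
  have key : dotProduct (⇑(b i)) ((Q * A) *ᵥ ⇑(b i))
      = dotProduct (Qᵀ *ᵥ ⇑(b i)) (A *ᵥ ⇑(b i)) := by
    rw [← Matrix.mulVec_mulVec, Matrix.dotProduct_mulVec, ← Matrix.mulVec_transpose]
  have hAv : dotProduct (A *ᵥ ⇑(b i)) (A *ᵥ ⇑(b i)) = hA.eigenvalues i := by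
    simpa using gma_mulVec_basis_dot A i i
  rw [key]
  calc dotProduct (Qᵀ *ᵥ ⇑(b i)) (A *ᵥ ⇑(b i))
      ≤ Real.sqrt (dotProduct (Qᵀ *ᵥ ⇑(b i)) (Qᵀ *ᵥ ⇑(b i)))
        * Real.sqrt (dotProduct (A *ᵥ ⇑(b i)) (A *ᵥ ⇑(b i))) := gma_dot_cs _ _
    _ ≤ Real.sqrt 1 * Real.sqrt (hA.eigenvalues i) := by
        apply mul_le_mul
        · apply Real.sqrt_le_sqrt; rw [← hvv]; exact hQ _
        · rw [hAv]
        · positivity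
        · positivity
    _ = singularValues A i := by rw [Real.sqrt_one, one_mul]; rfl

lemma gma_exists_dual (A : Matrix (Fin n) (Fin n) ℝ) :
    ∃ Q : Matrix (Fin n) (Fin n) ℝ,
      (∀ x : Fin n → ℝ, dotProduct (Qᵀ *ᵥ x) (Qᵀ *ᵥ x) ≤ dotProduct x x) ∧
      (Q * A).trace = nuclearNorm A := by
  classical
  set hA := Matrix.isHermitian_transpose_mul_self A with hhA
  set b := hA.eigenvectorBasis with hb
  set lam := hA.eigenvalues with hlam
  have hlnn : ∀ i, 0 ≤ lam i := fun i =>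
    (Matrix.posSemidef_conjTranspose_mul_self A).eigenvalues_nonneg i
  set c : Fin n → ℝ := fun i => (Real.sqrt (lam i))⁻¹ with hc
  refine ⟨∑ i, c i • Matrix.vecMulVec (⇑(b i)) (A *ᵥ ⇑(b i)), ?_, ?_⟩
  · intro x
    have hQT : (∑ i, c i • Matrix.vecMulVec (⇑(b i)) (A *ᵥ ⇑(b i)))ᵀ *ᵥ x
        = ∑ i, (c i * dotProduct (⇑(b i)) x) • (A *ᵥ ⇑(b i)) := by
      rw [Matrix.transpose_sum]
      simp_rw [Matrix.transpose_smul, gma_vecMulVec_transpose]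
      rw [gma_sum_mulVec]
      congr 1; ext i
      rw [Matrix.smul_mulVec, gma_vecMulVec_mulVec, smul_smul]
    rw [hQT]
    have expand : dotProduct (∑ i, (c i * dotProduct (⇑(b i)) x) • (A *ᵥ ⇑(b i)))
        (∑ j, (c j * dotProduct (⇑(b j)) x) • (A *ᵥ ⇑(b j)))
        = ∑ i, (c i * dotProduct (⇑(b i)) x)^2 * lam i := by
      rw [gma_sum_dotProduct]
      congr 1; ext i
      rw [smul_dotProduct, gma_dotProduct_sum]
      simp only [dotProduct_smul, hb, gma_mulVec_basis_dot A, smul_ite, smul_zero]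
      rw [Finset.sum_ite_eq Finset.univ i]
      simp only [Finset.mem_univ, if_true, smul_eq_mul]
      ring
    rw [expand]
    have parseval : ∑ i, (dotProduct (⇑(b i)) x)^2 = dotProduct x x := by
      have h : ∑ i, (dotProduct x (⇑(b i))) * (dotProduct (⇑(b i)) x)
          = dotProduct x x := by
        have h0 := b.sum_inner_mul_inner ((WithLp.equiv 2 (Fin n → ℝ)).symm x)
          ((WithLp.equiv 2 (Fin n → ℝ)).symm x)
        simp only [gma_inner_eq_dot] at h0
        exact h0
      rw [← h]
      congr 1; ext i
      rw [sq, dotProduct_comm x (⇑(b i))]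
    rw [← parseval]
    apply Finset.sum_le_sum
    intro i _
    have h1 : (c i * dotProduct (⇑(b i)) x)^2 * lam i
        = ((c i)^2 * lam i) * (dotProduct (⇑(b i)) x)^2 := by ring
    rw [h1]
    have h2 : (c i)^2 * lam i ≤ 1 := gma_sq_inv_sqrt_mul_self _ (hlnn i)
    nlinarith [sq_nonneg (dotProduct (⇑(b i)) x)]
  · rw [Finset.sum_mul, Matrix.trace_sum]
    simp_rw [smul_mul_assoc, Matrix.trace_smul, gma_trace_vecMulVec_mul, smul_eq_mul]
    rw [nuclearNorm]
    congr 1; ext i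
    have hww : dotProduct (A *ᵥ ⇑(b i)) (A *ᵥ ⇑(b i)) = lam i := by
      simpa using gma_mulVec_basis_dot A i i
    rw [hww]
    show (Real.sqrt (lam i))⁻¹ * lam i = Real.sqrt (lam i)
    exact gma_inv_sqrt_mul_self _ (hlnn i)

lemma gma_nuclearNorm_triangle (A B : Matrix (Fin n) (Fin n) ℝ) :
    nuclearNorm (A + B) ≤ nuclearNorm A + nuclearNorm B := by
  obtain ⟨Q, hQ, hQt⟩ := gma_exists_dual (A + B)
  calc nuclearNorm (A + B) = (Q * (A + B)).trace := hQt.symm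
    _ = (Q * A).trace + (Q * B).trace := by rw [mul_add, Matrix.trace_add]
    _ ≤ nuclearNorm A + nuclearNorm B :=
        add_le_add (gma_trace_mul_le A Q hQ) (gma_trace_mul_le B Q hQ)

lemma gma_nuclearNorm_le_add_sub (M N : Matrix (Fin n) (Fin n) ℝ) :
    nuclearNorm M ≤ nuclearNorm N + nuclearNorm (M - N) := by
  have := gma_nuclearNorm_triangle N (M - N)
  simpa using this

end AuxLA

lemma gma_sqrt_add_le (a b : ℝ) (ha : 0 ≤ a) (hb : 0 ≤ b) :
    Real.sqrt (a + b) ≤ Real.sqrt a + Real.sqrt b := by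
  have h : a + b ≤ (Real.sqrt a + Real.sqrt b)^2 := by
    nlinarith [Real.sq_sqrt ha, Real.sq_sqrt hb, Real.sqrt_nonneg a, Real.sqrt_nonneg b,
      mul_nonneg (Real.sqrt_nonneg a) (Real.sqrt_nonneg b)]
  calc Real.sqrt (a + b) ≤ Real.sqrt ((Real.sqrt a + Real.sqrt b)^2) := Real.sqrt_le_sqrt h
    _ = Real.sqrt a + Real.sqrt b := Real.sqrt_sq (by positivity)

lemma gma_rpow_three_halves (n : ℕ) : (n:ℝ)^((3:ℝ)/2) = Real.sqrt n * n := by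
  have h0 : (0:ℝ) ≤ n := n.cast_nonneg
  rw [show ((3:ℝ)/2) = ((3:ℕ):ℝ) * ((1:ℝ)/2) by norm_num, Real.rpow_mul h0,
    Real.rpow_natCast, ← Real.sqrt_eq_rpow]
  rw [show (n:ℝ)^(3:ℕ) = ((n:ℝ)*(n:ℝ))*(n:ℝ) by ring,
    Real.sqrt_mul (mul_self_nonneg _), Real.sqrt_mul_self h0]
  ring


theorem graphon_matrix_approximation {n k : ℕ} (f g : ℝ → ℝ → ℝ)
    (hf : Measurable (Function.uncurry f))
    (hfr : ∀ x y, f x y ∈ Set.Icc (0:ℝ) 1)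
    (hgr : ∀ x y, g x y ∈ Set.Icc (0:ℝ) 1)
    (hgcell : ∀ x y x' y' : ℝ, ⌊x * 2^k⌋ = ⌊x' * 2^k⌋ → ⌊y * 2^k⌋ = ⌊y' * 2^k⌋ →
      g x y = g x' y')
    {Ω : Type*} [MeasurableSpace Ω] (μ : Measure Ω) [IsProbabilityMeasure μ]
    (U : Fin n → Ω → ℝ) (hUm : ∀ i, Measurable (U i))
    (hUd : ∀ i, Measure.map (U i) μ = volume.restrict (Set.Icc (0:ℝ) 1))
    (hUi : iIndepFun U μ)
    (M N : Ω → Matrix (Fin n) (Fin n) ℝ)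
    (hM : ∀ ω i j, M ω i j = f (U i ω) (U j ω))
    (hN : ∀ ω i j, N ω i j = g (U i ω) (U j ω)) :
    (∫ ω, ∑ i, ∑ j, (M ω i j - N ω i j)^2 ∂μ
        ≤ (n : ℝ) + (n : ℝ)^2 *
            ∫ z in Set.Icc (0:ℝ) 1 ×ˢ Set.Icc (0:ℝ) 1, (f z.1 z.2 - g z.1 z.2)^2) ∧
    (∀ᵐ ω ∂μ, (N ω).rank ≤ 2^k) ∧
    (∀ᵐ ω ∂μ, nuclearNorm (N ω) ≤ (2:ℝ) ^ ((k:ℝ)/2) * n) ∧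
    ∫ ω, nuclearNorm (M ω) ∂μ
      ≤ ((2:ℝ) ^ ((k:ℝ)/2) + 1) * n + (n : ℝ) ^ ((3:ℝ)/2) *
          Real.sqrt
            (∫ z in Set.Icc (0:ℝ) 1 ×ˢ Set.Icc (0:ℝ) 1, (f z.1 z.2 - g z.1 z.2)^2) := by
  classical
  have two_pow_ne : ((2:ℝ)^k) ≠ 0 := by positivity
  -- measurability of g
  have hg : Measurable (Function.uncurry g) := by
    have key : ∀ x : ℝ, ⌊((⌊x * 2^k⌋ : ℝ) / 2^k) * 2^k⌋ = ⌊x * 2^k⌋ := by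
      intro x; rw [div_mul_cancel₀ _ two_pow_ne, Int.floor_intCast]
    have hrepr : Function.uncurry g = (fun p : ℤ × ℤ => g ((p.1 : ℝ) / 2^k) ((p.2 : ℝ) / 2^k))
        ∘ (fun z : ℝ × ℝ => (⌊z.1 * 2^k⌋, ⌊z.2 * 2^k⌋)) := by
      funext z
      exact hgcell _ _ _ _ (key z.1).symm (key z.2).symm
    rw [hrepr]
    exact (measurable_of_countable _).comp
      (((measurable_fst.mul_const _).floor).prodMk ((measurable_snd.mul_const _).floor))
  have hbound : ∀ x y : ℝ, (f x y - g x y)^2 ≤ 1 := by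
    intro x y
    have h1 := hfr x y; have h2 := hgr x y
    rw [Set.mem_Icc] at h1 h2
    nlinarith [h1.1, h1.2, h2.1, h2.2]
  set S : Set (ℝ × ℝ) := Set.Icc (0:ℝ) 1 ×ˢ Set.Icc (0:ℝ) 1 with hS
  set F : ℝ × ℝ → ℝ := fun z => (f z.1 z.2 - g z.1 z.2)^2 with hFdef
  have hF : Measurable F := by
    have h1 : Measurable fun z : ℝ × ℝ => Function.uncurry f z - Function.uncurry g z :=
      hf.sub hg
    exact h1.pow_const 2
  set I : ℝ := ∫ z in S, F z with hIdef
  have hI0 : 0 ≤ I := integral_nonneg fun z => sq_nonneg _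
  have hint : ∀ i j : Fin n, Integrable (fun ω => F (U i ω, U j ω)) μ := by
    intro i j
    have hm : Measurable fun ω => F (U i ω, U j ω) := hF.comp ((hUm i).prodMk (hUm j))
    apply Integrable.mono' (integrable_const (1:ℝ)) hm.aestronglyMeasurable
    filter_upwards with ω
    rw [Real.norm_eq_abs, abs_of_nonneg (sq_nonneg _)]
    exact hbound _ _
  have hoff : ∀ i j : Fin n, i ≠ j → ∫ ω, F (U i ω, U j ω) ∂μ = I := by
    intro i j hij
    have hpair0 := (indepFun_iff_map_prod_eq_prod_map_map (hUm i).aemeasurable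
      (hUm j).aemeasurable).mp (hUi.indepFun hij)
    rw [hUd i, hUd j] at hpair0
    rw [← integral_map ((hUm i).prodMk (hUm j)).aemeasurable hF.aestronglyMeasurable, hpair0,
      Measure.prod_restrict, ← Measure.volume_eq_prod]
  have hdiag : ∀ i : Fin n, ∫ ω, F (U i ω, U i ω) ∂μ ≤ 1 := by
    intro i
    calc ∫ ω, F (U i ω, U i ω) ∂μ ≤ ∫ _ω, (1:ℝ) ∂μ :=
        integral_mono (hint i i) (integrable_const 1) (fun ω => hbound _ _)
      _ = 1 := by simp
  have part1 : ∫ ω, ∑ i, ∑ j, (M ω i j - N ω i j)^2 ∂μ ≤ (n:ℝ) + (n:ℝ)^2 * I := by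
    have hrw : (fun ω => ∑ i, ∑ j, (M ω i j - N ω i j)^2)
        = fun ω => ∑ i, ∑ j, F (U i ω, U j ω) := by
      funext ω
      apply Finset.sum_congr rfl; intro i _
      apply Finset.sum_congr rfl; intro j _
      rw [hM, hN]
    calc ∫ ω, ∑ i, ∑ j, (M ω i j - N ω i j)^2 ∂μ
        = ∑ i, ∑ j, ∫ ω, F (U i ω, U j ω) ∂μ := by
          rw [hrw, integral_finset_sum _ fun i _ => integrable_finset_sum _ fun j _ => hint i j]
          exact Finset.sum_congr rfl fun i _ => integral_finset_sum _ fun j _ => hint i j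
      _ ≤ ∑ i : Fin n, ∑ j : Fin n, (if i = j then (1:ℝ) else I) := by
          apply Finset.sum_le_sum; intro i _; apply Finset.sum_le_sum; intro j _
          by_cases h : i = j
          · subst h; simpa using hdiag i
          · rw [if_neg h, hoff i j h]
      _ ≤ (n:ℝ) + (n:ℝ)^2 * I := by
          have hrow : ∀ i : Fin n, ∑ j : Fin n, (if i = j then (1:ℝ) else I)
              = (n:ℝ) * I + (1 - I) := by
            intro i
            have h1 : ∀ j : Fin n, (if i = j then (1:ℝ) else I)
                = I + (if i = j then 1 - I else 0) := by
              intro j; by_cases h : i = j <;> simp [h]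
            simp_rw [h1]
            rw [Finset.sum_add_distrib, Finset.sum_ite_eq Finset.univ i]
            simp
          simp_rw [hrow]
          rw [Finset.sum_const]
          simp only [Finset.card_univ, Fintype.card_fin, nsmul_eq_mul]
          nlinarith [hI0, Nat.cast_nonneg (α := ℝ) n]
  -- a.e. the U's are in [0,1)
  have hU01 : ∀ᵐ ω ∂μ, ∀ i, U i ω ∈ Set.Ico (0:ℝ) 1 := by
    rw [ae_all_iff]
    intro i
    rw [ae_iff]
    have h1 : {ω | ¬ U i ω ∈ Set.Ico (0:ℝ) 1} = (U i) ⁻¹' (Set.Ico (0:ℝ) 1)ᶜ := rfl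
    rw [h1, ← Measure.map_apply (hUm i) measurableSet_Ico.compl, hUd i,
      Measure.restrict_apply measurableSet_Ico.compl]
    have h2 : (Set.Ico (0:ℝ) 1)ᶜ ∩ Set.Icc 0 1 = {(1:ℝ)} := by
      ext x
      simp only [Set.mem_inter_iff, Set.mem_compl_iff, Set.mem_Ico, Set.mem_Icc,
        Set.mem_singleton_iff, not_and, not_lt]
      constructor
      · rintro ⟨ha, hb, hc⟩; exact le_antisymm hc (ha hb)
      · rintro rfl; exact ⟨fun _ => le_refl 1, by norm_num⟩
    rw [h2, Real.volume_singleton]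
  -- rank bound
  have hrank : ∀ ω, (∀ i, U i ω ∈ Set.Ico (0:ℝ) 1) → (N ω).rank ≤ 2^k := by
    intro ω hω
    have hc : ∀ i, (⌊U i ω * 2^k⌋).toNat < 2^k := by
      intro i
      have h0 : 0 ≤ ⌊U i ω * 2^k⌋ := Int.floor_nonneg.mpr
        (mul_nonneg (hω i).1 (by positivity : (0:ℝ) ≤ 2^k))
      have h1 : ⌊U i ω * 2^k⌋ < ((2^k : ℕ) : ℤ) := by
        apply Int.floor_lt.mpr
        push_cast
        calc U i ω * 2^k < 1 * 2^k :=
              mul_lt_mul_of_pos_right (hω i).2 (by positivity)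
          _ = 2^k := one_mul _
      omega
    set c : Fin n → Fin (2^k) := fun i => ⟨(⌊U i ω * 2^k⌋).toNat, hc i⟩ with hcdef
    have hcast : ∀ i, ((c i : ℕ) : ℝ) = ((⌊U i ω * 2^k⌋ : ℤ) : ℝ) := by
      intro i
      have h0 : 0 ≤ ⌊U i ω * 2^k⌋ := Int.floor_nonneg.mpr
        (mul_nonneg (hω i).1 (by positivity : (0:ℝ) ≤ 2^k))
      rw [hcdef]
      exact_mod_cast congrArg (Int.cast : ℤ → ℝ) (Int.toNat_of_nonneg h0)
    have hfl : ∀ i, ⌊U i ω * 2^k⌋ = ⌊(((c i : ℕ) : ℝ) / 2^k) * 2^k⌋ := by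
      intro i
      rw [div_mul_cancel₀ _ two_pow_ne, hcast i, Int.floor_intCast]
    have hcell : ∀ i j, N ω i j = g (((c i : ℕ) : ℝ) / 2^k) (((c j : ℕ) : ℝ) / 2^k) := by
      intro i j
      rw [hN]
      exact hgcell _ _ _ _ (hfl i) (hfl j)
    have hfact : N ω
        = (Matrix.of fun (i : Fin n) (a : Fin (2^k)) => if a = c i then (1:ℝ) else 0)
        * (Matrix.of fun (a : Fin (2^k)) (j : Fin n) =>
            g (((a : ℕ) : ℝ) / 2^k) (((c j : ℕ) : ℝ) / 2^k)) := by
      ext i j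
      rw [Matrix.mul_apply]
      simp only [Matrix.of_apply, ite_mul, one_mul, zero_mul]
      rw [Finset.sum_ite_eq' Finset.univ (c i)]
      simp [hcell i j]
    calc (N ω).rank ≤ _ := by rw [hfact]; exact Matrix.rank_mul_le_right _ _
      _ ≤ Fintype.card (Fin (2^k)) := Matrix.rank_le_card_height _
      _ = 2^k := by simp
  -- frobenius bound for N
  have hfrobN : ∀ ω, frobeniusNorm (N ω) ≤ n := by
    intro ω
    rw [frobeniusNorm]
    have hb : ∑ i, ∑ j, (N ω i j)^2 ≤ (n:ℝ) * n := by
      calc ∑ i, ∑ j, (N ω i j)^2 ≤ ∑ _i : Fin n, ∑ _j : Fin n, (1:ℝ) := by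
            apply Finset.sum_le_sum; intro i _; apply Finset.sum_le_sum; intro j _
            rw [hN]
            have h2 := hgr (U i ω) (U j ω); rw [Set.mem_Icc] at h2
            nlinarith [h2.1, h2.2]
        _ = (n:ℝ) * n := by simp
    calc Real.sqrt (∑ i, ∑ j, (N ω i j)^2) ≤ Real.sqrt ((n:ℝ) * n) := Real.sqrt_le_sqrt hb
      _ = n := Real.sqrt_mul_self (Nat.cast_nonneg n)
  have hsqrt2k : Real.sqrt ((2:ℝ)^k) = (2:ℝ) ^ ((k:ℝ)/2) := by
    rw [show ((2:ℝ)^k) = (2:ℝ)^((k:ℕ):ℝ) from (Real.rpow_natCast 2 k).symm,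
      Real.sqrt_eq_rpow, ← Real.rpow_mul (by norm_num : (0:ℝ) ≤ 2), mul_one_div]
  have hnucN : ∀ ω, (∀ i, U i ω ∈ Set.Ico (0:ℝ) 1) →
      nuclearNorm (N ω) ≤ (2:ℝ)^((k:ℝ)/2) * n := by
    intro ω hω
    calc nuclearNorm (N ω) ≤ Real.sqrt ((N ω).rank) * frobeniusNorm (N ω) :=
        gma_nuclearNorm_le_sqrt_rank_mul (N ω)
      _ ≤ Real.sqrt ((2:ℝ)^k) * n := by
          apply mul_le_mul
          · apply Real.sqrt_le_sqrt
            have h := hrank ω hω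
            calc ((N ω).rank : ℝ) ≤ ((2^k : ℕ) : ℝ) := by exact_mod_cast h
              _ = (2:ℝ)^k := by push_cast; ring
          · exact hfrobN ω
          · exact gma_frobeniusNorm_nonneg _
          · positivity
      _ = (2:ℝ)^((k:ℝ)/2) * n := by rw [hsqrt2k]
  refine ⟨part1, hU01.mono hrank, hU01.mono hnucN, ?_⟩
  -- part 4
  set φ : Ω → ℝ :=
    fun ω => Real.sqrt (∑ i, ∑ j, (f (U i ω) (U j ω) - g (U i ω) (U j ω))^2) with hφdef
  have hφeq : ∀ ω, frobeniusNorm (M ω - N ω) = φ ω := by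
    intro ω
    rw [frobeniusNorm, hφdef]
    congr 1
    apply Finset.sum_congr rfl; intro i _
    apply Finset.sum_congr rfl; intro j _
    rw [Matrix.sub_apply, hM, hN]
  have hφm : Measurable φ := by
    apply Measurable.comp Real.continuous_sqrt.measurable
    apply Finset.measurable_sum
    intro i _
    apply Finset.measurable_sum
    intro j _
    exact ((hf.comp ((hUm i).prodMk (hUm j))).sub
      (hg.comp ((hUm i).prodMk (hUm j)))).pow_const 2
  have hφ0 : ∀ ω, 0 ≤ φ ω := fun ω => Real.sqrt_nonneg _
  have hφle : ∀ ω, φ ω ≤ n := by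
    intro ω
    rw [hφdef]
    have hb : ∑ i, ∑ j, (f (U i ω) (U j ω) - g (U i ω) (U j ω))^2 ≤ (n:ℝ) * n := by
      calc ∑ i, ∑ j, (f (U i ω) (U j ω) - g (U i ω) (U j ω))^2
          ≤ ∑ _i : Fin n, ∑ _j : Fin n, (1:ℝ) := by
            apply Finset.sum_le_sum; intro i _; apply Finset.sum_le_sum; intro j _
            exact hbound _ _
        _ = (n:ℝ) * n := by simp
    calc Real.sqrt (∑ i, ∑ j, (f (U i ω) (U j ω) - g (U i ω) (U j ω))^2)
        ≤ Real.sqrt ((n:ℝ) * n) := Real.sqrt_le_sqrt hb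
      _ = n := Real.sqrt_mul_self (Nat.cast_nonneg n)
  have hφint : Integrable φ μ := by
    apply Integrable.mono' (integrable_const ((n:ℝ))) hφm.aestronglyMeasurable
    filter_upwards with ω
    rw [Real.norm_eq_abs, abs_of_nonneg (hφ0 ω)]
    exact hφle ω
  have hφsq : ∫ ω, (φ ω)^2 ∂μ ≤ (n:ℝ) + (n:ℝ)^2 * I := by
    have hsq : ∀ ω, (φ ω)^2 = ∑ i, ∑ j, (M ω i j - N ω i j)^2 := by
      intro ω
      rw [hφdef, Real.sq_sqrt (Finset.sum_nonneg fun i _ =>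
        Finset.sum_nonneg fun j _ => sq_nonneg _)]
      apply Finset.sum_congr rfl; intro i _
      apply Finset.sum_congr rfl; intro j _
      rw [hM, hN]
    calc ∫ ω, (φ ω)^2 ∂μ = ∫ ω, ∑ i, ∑ j, (M ω i j - N ω i j)^2 ∂μ := by simp_rw [hsq]
      _ ≤ (n:ℝ) + (n:ℝ)^2 * I := part1
  have hφmem : MemLp φ 2 μ := by
    apply memLp_of_bounded (a := 0) (b := (n:ℝ)) _ hφm.aestronglyMeasurable
    filter_upwards with ω
    exact ⟨hφ0 ω, hφle ω⟩
  have hEφ : ∫ ω, φ ω ∂μ ≤ Real.sqrt ((n:ℝ) + (n:ℝ)^2 * I) := by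
    have hvar := variance_nonneg φ μ
    rw [variance_eq_sub hφmem] at hvar
    have h1 : (∫ ω, φ ω ∂μ)^2 ≤ ∫ ω, (φ ω)^2 ∂μ := by
      simp only [Pi.pow_apply] at hvar
      linarith
    have h2 : 0 ≤ ∫ ω, φ ω ∂μ := integral_nonneg hφ0
    calc ∫ ω, φ ω ∂μ = Real.sqrt ((∫ ω, φ ω ∂μ)^2) := (Real.sqrt_sq h2).symm
      _ ≤ Real.sqrt ((n:ℝ) + (n:ℝ)^2 * I) := Real.sqrt_le_sqrt (h1.trans hφsq)
  have hsub : ∀ᵐ ω ∂μ, nuclearNorm (M ω) ≤ (2:ℝ)^((k:ℝ)/2) * n + Real.sqrt n * φ ω := by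
    filter_upwards [hU01] with ω hω
    calc nuclearNorm (M ω) ≤ nuclearNorm (N ω) + nuclearNorm (M ω - N ω) :=
        gma_nuclearNorm_le_add_sub _ _
      _ ≤ (2:ℝ)^((k:ℝ)/2) * n + Real.sqrt n * φ ω := by
          apply add_le_add (hnucN ω hω)
          calc nuclearNorm (M ω - N ω) ≤ Real.sqrt n * frobeniusNorm (M ω - N ω) :=
              gma_nuclearNorm_le_sqrt_card_mul _
            _ = Real.sqrt n * φ ω := by rw [hφeq]
  by_cases hMint : Integrable (fun ω => nuclearNorm (M ω)) μ
  · have step1 : ∫ ω, nuclearNorm (M ω) ∂μ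
        ≤ ∫ ω, ((2:ℝ)^((k:ℝ)/2) * n + Real.sqrt n * φ ω) ∂μ :=
      integral_mono_ae hMint ((integrable_const _).add (hφint.const_mul _)) hsub
    have step2 : ∫ ω, ((2:ℝ)^((k:ℝ)/2) * n + Real.sqrt n * φ ω) ∂μ
        = (2:ℝ)^((k:ℝ)/2) * n + Real.sqrt n * ∫ ω, φ ω ∂μ := by
      rw [integral_add (integrable_const _) (hφint.const_mul _), integral_const,
        integral_const_mul]
      simp
    have step3 : Real.sqrt ((n:ℝ) + (n:ℝ)^2 * I) ≤ Real.sqrt n + (n:ℝ) * Real.sqrt I := by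
      have h1 := gma_sqrt_add_le (n:ℝ) ((n:ℝ)^2 * I) (Nat.cast_nonneg n) (by positivity)
      have h2 : Real.sqrt ((n:ℝ)^2 * I) = (n:ℝ) * Real.sqrt I := by
        rw [Real.sqrt_mul (sq_nonneg _), Real.sqrt_sq (Nat.cast_nonneg n)]
      linarith
    calc ∫ ω, nuclearNorm (M ω) ∂μ
        ≤ (2:ℝ)^((k:ℝ)/2) * n + Real.sqrt n * ∫ ω, φ ω ∂μ := step1.trans_eq step2
      _ ≤ (2:ℝ)^((k:ℝ)/2) * n + Real.sqrt n * (Real.sqrt n + (n:ℝ) * Real.sqrt I) := by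
          apply add_le_add le_rfl
          exact mul_le_mul_of_nonneg_left (hEφ.trans step3) (Real.sqrt_nonneg _)
      _ = ((2:ℝ)^((k:ℝ)/2) + 1) * n + (n:ℝ)^((3:ℝ)/2) * Real.sqrt I := by
          rw [gma_rpow_three_halves]
          have hss : Real.sqrt (n:ℝ) * Real.sqrt (n:ℝ) = (n:ℝ) :=
            Real.mul_self_sqrt (Nat.cast_nonneg n)
          rw [mul_add, ← mul_assoc, hss]
          ring
  · rw [integral_undef hMint]
    positivity
end
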